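/- Let $k > 0$, $\rho_0 > 0$, and suppose $0 < d_0 < \sqrt{k\rho_0}$. Then the function $d(t) = (d_0 + k\rho_0 t)/(1 + d_0 t + \tfrac{k}{2}\rho_0 t^2)$ satisfies $0 < d(t) \leq d_{\max}$ for all $t \geq 0$, where $d_{\max} = \dfrac{k\rho_0}{\sqrt{2k\rho_0 - d_0^2}}$, and the maximum is attained at the time $t_e = \dfrac{\sqrt{2k\rho_0 - d_0^2} - d_0}{k\rho_0}$. -/

import Mathlib

theorem velocity_gradient_bounds
    (k ρ0 d0 : ℝ) (hk : 0 < k) (hρ0 : 0 < ρ0)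
    (hd0pos : 0 < d0) (hd0 : d0 < Real.sqrt (k * ρ0))
    (d : ℝ → ℝ)
    (hd : ∀ t, d t = (d0 + k * ρ0 * t) / (1 + d0 * t + k / 2 * ρ0 * t ^ 2)) :
    (∀ t ≥ (0:ℝ), 0 < d t ∧ d t ≤ k * ρ0 / Real.sqrt (2 * k * ρ0 - d0 ^ 2)) ∧
    d ((Real.sqrt (2 * k * ρ0 - d0 ^ 2) - d0) / (k * ρ0)) =
      k * ρ0 / Real.sqrt (2 * k * ρ0 - d0 ^ 2) := by
  have ha : 0 < k * ρ0 := mul_pos hk hρ0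
  have hd02 : d0 ^ 2 < k * ρ0 := by
    have := Real.sq_sqrt ha.le
    nlinarith [Real.sqrt_nonneg (k * ρ0)]
  set s := Real.sqrt (2 * k * ρ0 - d0 ^ 2) with hs
  have hs2 : s ^ 2 = 2 * k * ρ0 - d0 ^ 2 := Real.sq_sqrt (by nlinarith)
  have hspos : 0 < s := Real.sqrt_pos.mpr (by nlinarith)
  constructor
  · intro t ht
    have hden : 0 < 1 + d0 * t + k / 2 * ρ0 * t ^ 2 := by nlinarith
    constructor
    · rw [hd t]
      exact div_pos (by nlinarith) hden
    · rw [hd t, div_le_div_iff₀ hden hspos]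
      nlinarith [sq_nonneg (k * ρ0 * t + d0 - s)]
  · rw [hd]
    have hden : 0 < 1 + d0 * ((s - d0) / (k * ρ0)) + k / 2 * ρ0 * ((s - d0) / (k * ρ0)) ^ 2 := by
      have h1 : (1:ℝ) + d0 * ((s - d0) / (k * ρ0)) + k / 2 * ρ0 * ((s - d0) / (k * ρ0)) ^ 2
          = (2 * (k * ρ0) + 2 * d0 * (s - d0) + (s - d0) ^ 2) / (2 * (k * ρ0)) := by
        field_simp
      rw [h1]
      apply div_pos _ (by linarith)
      nlinarith
    rw [div_eq_div_iff hden.ne' hspos.ne']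
    field_simp
    linear_combination hs2
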